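/- Let Σ_{g1} and Σ_{g2} be closed orientable surfaces of genus g1 and g2 with g1, g2 > 1. Then every continuous map f : Σ_{g1} → Σ_{g2} satisfies |deg f| ≤ (g1 - 1)/(g2 - 1). -/

import Mathlib

open scoped BigOperators

noncomputable section

/-- Singular `n`-simplices of `X`: continuous maps from the standard `n`-simplex. -/
abbrev SingularSimplex (n : ℕ) (X : Type) [TopologicalSpace X] :=
  C(↥(stdSimplex ℝ (Fin (n + 1))), X)

/-- Real singular `n`-chains: finite formal `ℝ`-linear combinations of singular
`n`-simplices. -/
abbrev SingularChain (n : ℕ) (X : Type) [TopologicalSpace X] :=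
  SingularSimplex n X →₀ ℝ

/-- The `ℓ¹`-norm `|c|₁ = ∑ |a_j|` of a singular chain `c = ∑ a_j σ_j`. -/
def chainL1 {n : ℕ} {X : Type} [TopologicalSpace X] (c : SingularChain n X) : ℝ :=
  ∑ σ ∈ c.support, |c σ|

/-- The `i`-th face inclusion of the standard `n`-simplex into the standard
`(n+1)`-simplex (insert the barycentric coordinate `0` in position `i`). -/
def faceMap (n : ℕ) (i : Fin (n + 2)) :
    C(↥(stdSimplex ℝ (Fin (n + 1))), ↥(stdSimplex ℝ (Fin (n + 2)))) :=
  ⟨fun x => ⟨(i.insertNth (0 : ℝ) x.1 : Fin (n + 2) → ℝ), by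
      obtain ⟨x, hx⟩ := x
      refine ⟨fun j => ?_, ?_⟩
      · exact i.succAboveCases (by simp) (fun j => by simpa using hx.1 j) j
      · rw [Fin.sum_univ_succAbove _ i]
        simpa using hx.2⟩,
    by
      have h1 : Continuous fun y : Fin (n + 1) → ℝ =>
          (i.insertNth (0 : ℝ) y : Fin (n + 2) → ℝ) :=
        Continuous.finInsertNth i continuous_const continuous_id
      have h : Continuous fun x : ↥(stdSimplex ℝ (Fin (n + 1))) =>
          (i.insertNth (0 : ℝ) x.1 : Fin (n + 2) → ℝ) :=
        h1.comp continuous_subtype_val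
      exact h.subtype_mk _⟩

/-- The singular boundary operator `∂ : C_{n+1}(X;ℝ) → C_n(X;ℝ)`,
`∂σ = ∑ᵢ (-1)ⁱ σ ∘ δᵢ`. -/
def boundary (n : ℕ) (X : Type) [TopologicalSpace X]
    (c : SingularChain (n + 1) X) : SingularChain n X :=
  c.sum fun σ r => ∑ i : Fin (n + 2),
    ((-1 : ℝ) ^ (i : ℕ) * r) • Finsupp.single (σ.comp (faceMap n i)) (1 : ℝ)

/-- The pushforward (chain map) `f_#` of singular chains along a continuous map. -/
def pushforward {n : ℕ} {X Y : Type} [TopologicalSpace X] [TopologicalSpace Y]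
    (f : C(X, Y)) (c : SingularChain n X) : SingularChain n Y :=
  Finsupp.mapDomain (fun σ => f.comp σ) c

/-- `F` is the (nonempty) set of real singular `n`-cycles representing a fixed
homology class of `X` — e.g. the fundamental class `[X]` of an oriented closed
connected `n`-manifold `X`.  It consists of cycles, and two of its members differ
exactly by a boundary. -/
def IsFundamentalClass (n : ℕ) (X : Type) [TopologicalSpace X]
    (F : Set (SingularChain n X)) : Prop :=
  F.Nonempty ∧
  (∀ c ∈ F, ∀ m (h : n = m + 1), boundary m X (h ▸ c) = 0) ∧
  (∀ c ∈ F, ∀ c', c' ∈ F ↔ ∃ b, c' = c + boundary n X b)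

/-- The simplicial volume (Gromov norm) associated with the class `F`:
`inf { |c|₁ : c ∈ F }`. -/
def simplicialVolume {n : ℕ} {X : Type} [TopologicalSpace X]
    (F : Set (SingularChain n X)) : ℝ :=
  sInf (chainL1 '' F)

/-- `f` has degree `d` with respect to the classes `FX`, `FY`:
`f_*[X] = d·[Y]`, i.e. the pushforward of any representative of `[X]` is
homologous to `d` times a representative of `[Y]`. -/
def HasDegree {n : ℕ} {X Y : Type} [TopologicalSpace X] [TopologicalSpace Y]
    (f : C(X, Y)) (FX : Set (SingularChain n X)) (FY : Set (SingularChain n Y))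
    (d : ℤ) : Prop :=
  ∀ c ∈ FX, ∃ c' ∈ FY, ∃ b, pushforward f c = (d : ℝ) • c' + boundary n Y b

section Aux

variable {n : ℕ} {X Y : Type} [TopologicalSpace X] [TopologicalSpace Y]

lemma chainL1_nonneg (c : SingularChain n X) : 0 ≤ chainL1 c :=
  Finset.sum_nonneg fun _ _ => abs_nonneg _

lemma chainL1_eq_of_subset (c : SingularChain n X) {s : Finset (SingularSimplex n X)}
    (hs : c.support ⊆ s) : chainL1 c = ∑ σ ∈ s, |c σ| := by
  unfold chainL1
  exact Finset.sum_subset hs fun x _ hx => by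
    simp [Finsupp.notMem_support_iff.mp hx]

lemma chainL1_zero : chainL1 (0 : SingularChain n X) = 0 := by
  simp [chainL1]

lemma chainL1_add_le (a b : SingularChain n X) :
    chainL1 (a + b) ≤ chainL1 a + chainL1 b := by
  classical
  rw [chainL1_eq_of_subset (a + b) (Finsupp.support_add),
    chainL1_eq_of_subset a (Finset.subset_union_left (s₂ := b.support)),
    chainL1_eq_of_subset b (Finset.subset_union_right (s₁ := a.support)),
    ← Finset.sum_add_distrib]
  exact Finset.sum_le_sum fun σ _ => by
    simpa using abs_add_le (a σ) (b σ)

lemma chainL1_smul (r : ℝ) (c : SingularChain n X) :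
    chainL1 (r • c) = |r| * chainL1 c := by
  rw [chainL1_eq_of_subset (r • c) (Finsupp.support_smul), chainL1, Finset.mul_sum]
  exact Finset.sum_congr rfl fun σ _ => by
    simp [abs_mul]

lemma chainL1_sum_le {ι : Type*} (s : Finset ι) (h : ι → SingularChain n X) :
    chainL1 (∑ i ∈ s, h i) ≤ ∑ i ∈ s, chainL1 (h i) := by
  classical
  induction s using Finset.induction_on with
  | empty => simp [chainL1_zero]
  | insert _ _ hx ih =>
    rw [Finset.sum_insert hx, Finset.sum_insert hx]
    exact (chainL1_add_le _ _).trans (by linarith)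

lemma chainL1_single_le (x : SingularSimplex n X) (r : ℝ) :
    chainL1 (Finsupp.single x r) ≤ |r| := by
  rw [chainL1_eq_of_subset _ Finsupp.support_single_subset]
  simp

lemma chainL1_pushforward_le (f : C(X, Y)) (c : SingularChain n X) :
    chainL1 (pushforward f c) ≤ chainL1 c := by
  rw [pushforward, Finsupp.mapDomain]
  refine (chainL1_sum_le _ _).trans ?_
  rw [chainL1]
  exact Finset.sum_le_sum fun σ _ => chainL1_single_le _ _

lemma boundary_smul (r : ℝ) (b : SingularChain (n + 1) X) :
    boundary n X (r • b) = r • boundary n X b := by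
  unfold boundary
  rw [Finsupp.sum_smul_index' (by intro σ; simp), Finsupp.smul_sum]
  refine Finset.sum_congr rfl fun σ _ => ?_
  simp only [smul_eq_mul, Finset.smul_sum, smul_smul]
  exact Finset.sum_congr rfl fun i _ => by ring_nf

end Aux

/-- Let `Σ_{g1}`, `Σ_{g2}` be closed orientable surfaces of genus
`g1, g2 > 1` (encoded via their fundamental classes and the computation
`‖Σ_g‖ = 4g - 4` of the simplicial volume).  Every continuous map
`f : Σ_{g1} → Σ_{g2}` satisfies `|deg f| ≤ (g1 - 1)/(g2 - 1)`. -/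
theorem stmt5 (g1 g2 : ℕ) (hg1 : 1 < g1) (hg2 : 1 < g2)
    (M N : Type) [TopologicalSpace M] [TopologicalSpace N]
    (FM : Set (SingularChain 2 M)) (FN : Set (SingularChain 2 N))
    (hFM : IsFundamentalClass 2 M FM) (hFN : IsFundamentalClass 2 N FN)
    (hvolM : simplicialVolume FM = 4 * (g1 : ℝ) - 4)
    (hvolN : simplicialVolume FN = 4 * (g2 : ℝ) - 4)
    (f : C(M, N)) (d : ℤ) (hdeg : HasDegree f FM FN d) :
    |(d : ℝ)| ≤ ((g1 : ℝ) - 1) / ((g2 : ℝ) - 1) := by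
  have hg1' : (1 : ℝ) < g1 := by exact_mod_cast hg1
  have hg2' : (1 : ℝ) < g2 := by exact_mod_cast hg2
  have hvolNpos : (0 : ℝ) < 4 * (g2 : ℝ) - 4 := by linarith
  -- Gromov's inequality: |d| * ‖N‖ ≤ ‖M‖
  have key : |(d : ℝ)| * (4 * (g2 : ℝ) - 4) ≤ 4 * (g1 : ℝ) - 4 := by
    rcases eq_or_ne d 0 with rfl | hd
    · simp; linarith
    have hd' : ((d : ℝ)) ≠ 0 := Int.cast_ne_zero.mpr hd
    rw [← hvolM]
    have hbddN : BddBelow (chainL1 '' FN) := by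
      refine ⟨0, ?_⟩
      rintro x ⟨c, _, rfl⟩
      exact chainL1_nonneg c
    refine le_csInf (hFM.1.image _) ?_
    rintro x ⟨c, hc, rfl⟩
    obtain ⟨c', hc', b, hb⟩ := hdeg c hc
    -- z := d⁻¹ • f_# c is a representative of the fundamental class of N
    set z : SingularChain 2 N := (d : ℝ)⁻¹ • pushforward f c with hz
    have hzmem : z ∈ FN := by
      rw [(hFN.2.2 c' hc' z)]
      refine ⟨(d : ℝ)⁻¹ • b, ?_⟩
      rw [hz, hb, smul_add, smul_smul, inv_mul_cancel₀ hd', one_smul, boundary_smul]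
    have h1 : simplicialVolume FN ≤ chainL1 z :=
      csInf_le hbddN ⟨z, hzmem, rfl⟩
    have h2 : chainL1 z = |(d : ℝ)|⁻¹ * chainL1 (pushforward f c) := by
      rw [hz, chainL1_smul, abs_inv]
    have h3 : chainL1 (pushforward f c) ≤ chainL1 c := chainL1_pushforward_le f c
    have habs : (0 : ℝ) < |(d : ℝ)| := abs_pos.mpr hd'
    rw [← hvolN]
    calc |(d : ℝ)| * simplicialVolume FN
        ≤ |(d : ℝ)| * chainL1 z := by
          exact mul_le_mul_of_nonneg_left h1 (le_of_lt habs)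
      _ = chainL1 (pushforward f c) := by
          rw [h2, ← mul_assoc, mul_inv_cancel₀ (ne_of_gt habs), one_mul]
      _ ≤ chainL1 c := h3
  have := (le_div_iff₀ hvolNpos).mpr key
  calc |(d : ℝ)| ≤ (4 * (g1 : ℝ) - 4) / (4 * (g2 : ℝ) - 4) := this
    _ = ((g1 : ℝ) - 1) / ((g2 : ℝ) - 1) := by
        rw [div_eq_div_iff (ne_of_gt hvolNpos) (ne_of_gt (by linarith))]; ring

end
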